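/- Let T be a tensor of format n × n × p over a field K, and suppose A ∈ span(T_1, …, T_p) is an invertible matrix such that the p-tuple (A^{-1}T_1, …, A^{-1}T_p) admits a commuting extension (Z_1, …, Z_p) of size r ≥ n in which every Z_i is diagonalizable over K. Then rank(T) ≤ r. -/

import Mathlib

open Matrix BigOperators

variable {K : Type*} [Field K]

/-- `T` equals the sum of `r` rank-one tensors with components `u i`, `v i`, `w i`. -/
def tensorDecomp {α β γ : Type*} [Fintype α] [Fintype β] [Fintype γ]
    (T : α → β → γ → K) (r : ℕ)
    (u : Fin r → α → K) (v : Fin r → β → K) (w : Fin r → γ → K) : Prop :=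
  ∀ i j k, T i j k = ∑ l, u l i * v l j * w l k

/-- The rank of a tensor: least number of rank-one summands. -/
noncomputable def tensorRank {α β γ : Type*} [Fintype α] [Fintype β] [Fintype γ]
    (T : α → β → γ → K) : ℕ :=
  sInf {r | ∃ u v w, tensorDecomp T r u v w}

/-- The `k`-th z-zSlice of a tensor. -/
def zSlice {α β : Type*} {p : ℕ} (T : α → β → Fin p → K) (k : Fin p) : Matrix α β K :=
  Matrix.of fun i j => T i j k

/-- A matrix is diagonalizable if it is similar over `K` to a diagonal matrix. -/
def Diagonalizable {ι : Type*} [Fintype ι] [DecidableEq ι] (M : Matrix ι ι K) : Prop :=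
  ∃ P : Matrix ι ι K, IsUnit P ∧ ∃ d : ι → K, M = P * Matrix.diagonal d * P⁻¹

open Polynomial Module
lemma aeval_units_conj {r : ℕ} (u : (Matrix (Fin r) (Fin r) K)ˣ)
    (D : Matrix (Fin r) (Fin r) K) (q : K[X]) :
    aeval ((u : Matrix (Fin r) (Fin r) K) * D * ((u : Matrix (Fin r) (Fin r) K))⁻¹) q
      = (u : Matrix (Fin r) (Fin r) K) * aeval D q * ((u : Matrix (Fin r) (Fin r) K))⁻¹ := by
  have h := Polynomial.aeval_algHom_apply
    (MulSemiringAction.toAlgHom K (Matrix (Fin r) (Fin r) K) (ConjAct.toConjAct u)) D q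
  simpa [MulSemiringAction.toAlgHom_apply, ConjAct.units_smul_def] using h

/-- A diagonalizable matrix gives a semisimple endomorphism. -/
lemma isSemisimple_of_diagonalizable {r : ℕ} {M : Matrix (Fin r) (Fin r) K}
    (h : ∃ P : Matrix (Fin r) (Fin r) K, IsUnit P ∧ ∃ d : Fin r → K,
      M = P * Matrix.diagonal d * P⁻¹) :
    Module.End.IsSemisimple (Matrix.toLin' M) := by
  classical
  obtain ⟨P, hP, d, rfl⟩ := h
  set s : Finset K := Finset.univ.image d with hs
  set q : K[X] := ∏ μ ∈ s, (X - C μ) with hq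
  have hsf : Squarefree q := by
    refine (Polynomial.separable_prod_X_sub_C_iff'.mpr ?_).squarefree
    exact fun x _ y _ hxy => hxy
  have hdq : ∀ i, aeval (d i) q = 0 := by
    intro i
    rw [hq, map_prod]
    exact Finset.prod_eq_zero (Finset.mem_image_of_mem d (Finset.mem_univ i)) (by simp)
  have hDq : aeval (Matrix.diagonal d) q = 0 := by
    have h1 : Matrix.diagonal d = Matrix.diagonalAlgHom (n := Fin r) K d := rfl
    rw [h1, Polynomial.aeval_algHom_apply]
    have h2 : (aeval d) q = 0 := by
      funext i
      have := Polynomial.aeval_algHom_apply (Pi.evalAlgHom K (fun _ : Fin r => K) i) d q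
      simpa [hdq i] using this.symm.trans (hdq i)
    rw [h2, map_zero]
  have hMq : aeval (P * Matrix.diagonal d * P⁻¹) q = 0 := by
    lift P to (Matrix (Fin r) (Fin r) K)ˣ using hP with u
    rw [aeval_units_conj, hDq, mul_zero, zero_mul]
  apply Module.End.isSemisimple_of_squarefree_aeval_eq_zero hsf
  have h3 := Polynomial.aeval_algHom_apply (Matrix.toLinAlgEquiv' :
    Matrix (Fin r) (Fin r) K ≃ₐ[K] _).toAlgHom (P * Matrix.diagonal d * P⁻¹) q
  rw [hMq] at h3
  have h4 : Matrix.toLin' (P * Matrix.diagonal d * P⁻¹)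
      = Matrix.toLinAlgEquiv' (P * Matrix.diagonal d * P⁻¹) := rfl
  rw [h4]
  simpa using h3

lemma iSup_eigenspace_eq_top_of_diagonalizable {r : ℕ} {M : Matrix (Fin r) (Fin r) K}
    (h : ∃ P : Matrix (Fin r) (Fin r) K, IsUnit P ∧ ∃ d : Fin r → K,
      M = P * Matrix.diagonal d * P⁻¹) :
    ⨆ μ, Module.End.eigenspace (Matrix.toLin' M) μ = ⊤ := by
  obtain ⟨P, hP, d, rfl⟩ := h
  have hPdet := (Matrix.isUnit_iff_isUnit_det P).mp hP
  have hPP : P * P⁻¹ = 1 := Matrix.mul_nonsing_inv _ hPdet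
  have hPP' : P⁻¹ * P = 1 := Matrix.nonsing_inv_mul _ hPdet
  rw [eq_top_iff]
  intro x _
  set y := P⁻¹ *ᵥ x with hy
  have hx : x = P *ᵥ y := by
    rw [hy, Matrix.mulVec_mulVec, hPP, Matrix.one_mulVec]
  have hx2 : x = ∑ i, y i • (P *ᵥ Pi.single i 1) := by
    funext j
    rw [hx]
    simp only [Matrix.mulVec_single, mul_one, Finset.sum_apply, Pi.smul_apply, smul_eq_mul,
      Matrix.mulVec, dotProduct]
    exact Finset.sum_congr rfl fun i _ => by simp [mul_comm]
  have hcol : ∀ i, (P *ᵥ Pi.single i 1) ∈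
      Module.End.eigenspace (Matrix.toLin' (P * Matrix.diagonal d * P⁻¹)) (d i) := by
    intro i
    rw [Module.End.mem_eigenspace_iff, Matrix.toLin'_apply, Matrix.mulVec_mulVec,
      Matrix.mul_assoc (P * Matrix.diagonal d) P⁻¹ P, hPP', Matrix.mul_one,
      ← Matrix.mulVec_mulVec, Matrix.diagonal_mulVec_single, mul_one]
    funext j
    simp [mul_comm]
  rw [hx2]
  exact Submodule.sum_mem _ fun i _ =>
    Submodule.smul_mem _ _ (Submodule.mem_iSup_of_mem (d i) (hcol i))

lemma exists_simul_diag {p r : ℕ} (Z : Fin p → Matrix (Fin r) (Fin r) K)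
    (hcomm : ∀ i j, Commute (Z i) (Z j))
    (hdiag : ∀ k, ∃ P : Matrix (Fin r) (Fin r) K, IsUnit P ∧ ∃ d : Fin r → K,
      Z k = P * Matrix.diagonal d * P⁻¹) :
    ∃ P : Matrix (Fin r) (Fin r) K, IsUnit P ∧ ∃ d : Fin p → Fin r → K,
      ∀ k, Z k = P * Matrix.diagonal (d k) * P⁻¹ := by
  classical
  set f : Fin p → Module.End K (Fin r → K) := fun k => Matrix.toLin' (Z k) with hf
  have hmul : ∀ i j, f i * f j = Matrix.toLin' (Z i * Z j) := by
    intro i j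
    rw [hf]
    dsimp only
    rw [Matrix.toLin'_mul]
    rfl
  have hcommf : Pairwise fun i j => Commute (f i) (f j) := by
    intro i j _
    show f i * f j = f j * f i
    rw [hmul, hmul, hcomm i j]
  have hss : ∀ k, Module.End.IsSemisimple (f k) := fun k =>
    isSemisimple_of_diagonalizable (hdiag k)
  have hmax : ∀ k μ, (f k).maxGenEigenspace μ = (f k).eigenspace μ := fun k μ =>
    ((hss k).isFinitelySemisimple).maxGenEigenspace_eq_eigenspace μ
  have htop : ⨆ χ : Fin p → K, ⨅ k, (f k).maxGenEigenspace (χ k) = ⊤ := by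
    refine Module.End.iSup_iInf_maxGenEigenspace_eq_top_of_iSup_maxGenEigenspace_eq_top_of_commute
      f hcommf (fun k => ?_)
    simp_rw [hmax k]
    exact iSup_eigenspace_eq_top_of_diagonalizable (hdiag k)
  have hind : iSupIndep fun χ : Fin p → K => ⨅ k, (f k).maxGenEigenspace (χ k) := by
    refine Module.End.independent_iInf_maxGenEigenspace_of_forall_mapsTo f (fun i j φ => ?_)
    refine Module.End.mapsTo_maxGenEigenspace_of_comm ?_ φ
    rcases eq_or_ne i j with rfl | h
    · rfl
    · exact hcommf h.symm
  have hinternal : DirectSum.IsInternal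
      (fun χ : Fin p → K => ⨅ k, (f k).maxGenEigenspace (χ k)) :=
    DirectSum.isInternal_submodule_of_iSupIndep_of_iSup_eq_top hind htop
  let b := hinternal.collectedBasis (fun χ => Module.Free.chooseBasis K
    (↥(⨅ k, (f k).maxGenEigenspace (χ k))))
  let e0 := b.indexEquiv (Pi.basisFun K (Fin r))
  let e := b.reindex e0
  set χOf : Fin r → (Fin p → K) := fun l => (e0.symm l).1 with hχOf
  have hevec : ∀ k l, f k (e l) = χOf l k • e l := by
    intro k l
    have hm : e l ∈ ⨅ k, (f k).maxGenEigenspace (χOf l k) := by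
      have : e l = b (e0.symm l) := b.reindex_apply e0 l
      rw [this]
      exact hinternal.collectedBasis_mem _ (e0.symm l)
    have hm2 : e l ∈ (f k).eigenspace (χOf l k) := by
      rw [← hmax]
      exact (Submodule.mem_iInf _).mp hm k
    exact Module.End.mem_eigenspace_iff.mp hm2
  set P : Matrix (Fin r) (Fin r) K := (Pi.basisFun K (Fin r)).toMatrix ⇑e with hP
  have hPapp : ∀ j l, P j l = e l j := by
    intro j l
    rw [hP, Basis.toMatrix_apply, Pi.basisFun_repr]
  have hPunit : IsUnit P := by
    have := Basis.invertibleToMatrix (Pi.basisFun K (Fin r)) e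
    exact isUnit_of_invertible P
  have hPdet := (Matrix.isUnit_iff_isUnit_det P).mp hPunit
  have hPP : P * P⁻¹ = 1 := Matrix.mul_nonsing_inv _ hPdet
  have hPP' : P⁻¹ * P = 1 := Matrix.nonsing_inv_mul _ hPdet
  refine ⟨P, hPunit, fun k l => χOf l k, fun k => ?_⟩
  have hZP : Z k * P = P * Matrix.diagonal (fun l => χOf l k) := by
    ext i l
    rw [Matrix.mul_diagonal, hPapp i l]
    have h1 : (Z k * P) i l = (Z k *ᵥ e l) i := by
      simp only [Matrix.mul_apply, Matrix.mulVec, dotProduct]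
      exact Finset.sum_congr rfl fun j _ => by rw [hPapp j l]
    rw [h1, ← Matrix.toLin'_apply, show Matrix.toLin' (Z k) = f k from rfl, hevec k l]
    simp [mul_comm]
  calc Z k = Z k * P * P⁻¹ := by rw [Matrix.mul_assoc, hPP, Matrix.mul_one]
  _ = P * Matrix.diagonal (fun l => χOf l k) * P⁻¹ := by rw [hZP]


theorem tensorRank_le_of_diagonalizable_commuting_extension
    {n p r : ℕ} (hnr : n ≤ r) (T : Fin n → Fin n → Fin p → K)
    (A : Matrix (Fin n) (Fin n) K)
    (hA : A ∈ Submodule.span K (Set.range fun k => zSlice T k))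
    (hAinv : IsUnit A)
    (Z : Fin p → Matrix (Fin r) (Fin r) K)
    (hcomm : ∀ i j, Commute (Z i) (Z j))
    (hext : ∀ k, (Z k).submatrix (Fin.castLE hnr) (Fin.castLE hnr) = A⁻¹ * zSlice T k)
    (hdiag : ∀ k, Diagonalizable (Z k)) :
    tensorRank T ≤ r := by
  obtain ⟨P, hPunit, d, hZ⟩ := exists_simul_diag Z hcomm (fun k => hdiag k)
  have hAdet := (Matrix.isUnit_iff_isUnit_det A).mp hAinv
  have hT : ∀ k, zSlice T k = A * ((Z k).submatrix (Fin.castLE hnr) (Fin.castLE hnr)) := by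
    intro k
    rw [hext k, ← Matrix.mul_assoc, Matrix.mul_nonsing_inv _ hAdet, Matrix.one_mul]
  refine Nat.sInf_le ⟨(fun l i => ∑ i', A i i' * P (Fin.castLE hnr i') l),
    (fun l j => P⁻¹ l (Fin.castLE hnr j)), (fun l k => d k l), ?_⟩
  intro i j k
  have hZk : ∀ a b, (Z k) a b = ∑ l, P a l * d k l * P⁻¹ l b := by
    intro a b
    rw [hZ k, Matrix.mul_apply]
    exact Finset.sum_congr rfl fun l _ => by rw [Matrix.mul_diagonal]
  have h1 : T i j k = (zSlice T k) i j := rfl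
  rw [h1, hT k, Matrix.mul_apply]
  simp only [Matrix.submatrix_apply, hZk]
  simp only [Finset.mul_sum, Finset.sum_mul]
  rw [Finset.sum_comm]
  exact Finset.sum_congr rfl fun l _ => Finset.sum_congr rfl fun i' _ => by ring
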